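/- Swapping deficient vertices preserves optimality: In the setting where G is a finite simple graph with no (a,b)-feasible pair, a, b, h as above with d_G(u) = a(u)+b(u)+h(u) and min{a(u),b(u)} ≥ 1 for all u, let (X_1, X_2) be a degenerate partition maximizing the weight ω and, subject to that, minimizing |X_1|. Suppose u_1 ∈ X_1 with d_{X_1}(u_1) ≤ a(u_1), and u_2 ∈ X_2 with d_{X_2}(u_2) ≤ b(u_2)+h(u_2)−1, and either h(u_1) = h(u_2) = 0 or h(u_1) = 1. Then the swapped partition ((X_1 \ {u_1}) ∪ {u_2}, (X_2 \ {u_2}) ∪ {u_1}) is also a degenerate partition with the same maximum weight and minimum |X_1|; moreover if h(u_1) = 1 then h(u_2) = 1. -/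

import Mathlib

open scoped Classical

/-- `(A, B)` forms an `(a,b)`-feasible pair in `G`. -/
def FeasiblePair {V : Type*} [DecidableEq V] (G : SimpleGraph V) [DecidableRel G.Adj]
    (a b : V → ℕ) : Prop :=
  ∃ A B : Finset V, A.Nonempty ∧ B.Nonempty ∧ Disjoint A B ∧
    (∀ u ∈ A, a u ≤ (A.filter (G.Adj u)).card) ∧
    (∀ v ∈ B, b v ≤ (B.filter (G.Adj v)).card)

/-- Number of edges of `G` with both endpoints in `X`. -/
noncomputable def edgesIn {V : Type*} [Fintype V] [DecidableEq V]
    (G : SimpleGraph V) [DecidableRel G.Adj] (X : Finset V) : ℕ :=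
  (G.edgeFinset.filter (fun e => ∀ v ∈ e, v ∈ X)).card

/-- The weight `ω(X₁, X₂) = e(X₁) + e(X₂) + Σ_{u ∈ X₁} b(u) + Σ_{v ∈ X₂} a(v)`. -/
noncomputable def wt {V : Type*} [Fintype V] [DecidableEq V]
    (G : SimpleGraph V) [DecidableRel G.Adj] (a b : V → ℕ) (X1 X2 : Finset V) : ℕ :=
  edgesIn G X1 + edgesIn G X2 + ∑ u ∈ X1, b u + ∑ v ∈ X2, a v

/-- A degenerate partition: both parts are non-empty, they partition `V(G)`,
`X₁` is 1-meager and `X₂` is 2-meager. -/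
def DegenPartition {V : Type*} [Fintype V] [DecidableEq V]
    (G : SimpleGraph V) [DecidableRel G.Adj] (a b h : V → ℕ) (X1 X2 : Finset V) : Prop :=
  X1.Nonempty ∧ X2.Nonempty ∧ Disjoint X1 X2 ∧ X1 ∪ X2 = Finset.univ ∧
    (∀ X' ⊆ X1, X'.Nonempty → ∃ x ∈ X', (X'.filter (G.Adj x)).card ≤ a x) ∧
    (∀ X' ⊆ X2, X'.Nonempty → ∃ x ∈ X', (X'.filter (G.Adj x)).card + 1 ≤ b x + h x)

section SwapHelpers

variable {V : Type*} [Fintype V] [DecidableEq V] (G : SimpleGraph V) [DecidableRel G.Adj]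

omit [Fintype V] in
lemma filter_adj_erase' (X : Finset V) (v : V) :
    (X.erase v).filter (G.Adj v) = X.filter (G.Adj v) := by
  rw [Finset.filter_erase]
  apply Finset.erase_eq_of_notMem
  simp [G.irrefl]

lemma edgesIn_insert (X : Finset V) (v : V) (hv : v ∉ X) :
    edgesIn G (insert v X) = edgesIn G X + (X.filter (G.Adj v)).card := by
  unfold edgesIn
  have himg : (G.edgeFinset.filter (fun e => ∀ w ∈ e, w ∈ insert v X))
      = (G.edgeFinset.filter (fun e => ∀ w ∈ e, w ∈ X)) ∪
        (X.filter (G.Adj v)).image (fun x => s(v, x)) := by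
    ext e
    induction e with
    | _ x y =>
      simp only [Finset.mem_filter, Finset.mem_union, Finset.mem_image,
        SimpleGraph.mem_edgeFinset, SimpleGraph.mem_edgeSet, Sym2.mem_iff,
        Finset.mem_insert]
      constructor
      · rintro ⟨hadj, hmem⟩
        have hx := hmem x (Or.inl rfl)
        have hy := hmem y (Or.inr rfl)
        rcases hx with rfl | hx
        · rcases hy with rfl | hy
          · exact absurd hadj (G.irrefl)
          · right; exact ⟨y, ⟨hy, hadj⟩, rfl⟩
        · rcases hy with rfl | hy
          · right; exact ⟨x, ⟨hx, G.adj_symm hadj⟩, Sym2.eq_swap⟩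
          · left; refine ⟨hadj, ?_⟩
            intro w hw; rcases hw with rfl | rfl
            · exact hx
            · exact hy
      · rintro (⟨hadj, hmem⟩ | ⟨z, hz, hze⟩)
        · refine ⟨hadj, ?_⟩
          intro w hw; rcases hw with rfl | rfl
          · exact Or.inr (hmem w (Or.inl rfl))
          · exact Or.inr (hmem w (Or.inr rfl))
        · obtain ⟨hzX, hadj⟩ := hz
          rw [Sym2.eq_iff] at hze
          rcases hze with ⟨rfl, rfl⟩ | ⟨rfl, rfl⟩
          · exact ⟨hadj, by rintro w (rfl | rfl) <;> simp [hzX]⟩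
          · exact ⟨G.adj_symm hadj, by rintro w (rfl | rfl) <;> simp [hzX]⟩
  rw [himg, Finset.card_union_of_disjoint, Finset.card_image_of_injective]
  · intro c d hcd
    rw [Sym2.eq_iff] at hcd
    rcases hcd with ⟨-, h⟩ | ⟨h1, h2⟩
    · exact h
    · rw [← h1, h2]
  · rw [Finset.disjoint_left]
    intro e he hei
    obtain ⟨z, hz, rfl⟩ := Finset.mem_image.1 hei
    have := (Finset.mem_filter.1 he).2 v (by simp)
    exact hv this

lemma edgesIn_erase (X : Finset V) (v : V) (hv : v ∈ X) :
    edgesIn G X = edgesIn G (X.erase v) + (X.filter (G.Adj v)).card := by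
  conv_lhs => rw [← Finset.insert_erase hv]
  rw [edgesIn_insert G _ v (Finset.notMem_erase v X), filter_adj_erase']

end SwapHelpers

/-- Swapping deficient vertices preserves optimality (Claim 8). -/
theorem swap_preserves_optimality {V : Type*} [Fintype V] [DecidableEq V]
    (G : SimpleGraph V) [DecidableRel G.Adj] (a b h : V → ℕ)
    (hh : ∀ u, h u ≤ 1)
    (hdeg : ∀ u : V, G.degree u = a u + b u + h u)
    (ha : ∀ u, 1 ≤ a u) (hb : ∀ u, 1 ≤ b u)
    (hnf : ¬ FeasiblePair G a b)
    (X1 X2 : Finset V) (hP : DegenPartition G a b h X1 X2)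
    (hmaxw : ∀ Y1 Y2 : Finset V, DegenPartition G a b h Y1 Y2 →
      wt G a b Y1 Y2 ≤ wt G a b X1 X2)
    (hminc : ∀ Y1 Y2 : Finset V, DegenPartition G a b h Y1 Y2 →
      wt G a b Y1 Y2 = wt G a b X1 X2 → X1.card ≤ Y1.card)
    (u1 : V) (hu1 : u1 ∈ X1) (hd1 : (X1.filter (G.Adj u1)).card ≤ a u1)
    (u2 : V) (hu2 : u2 ∈ X2) (hd2 : (X2.filter (G.Adj u2)).card + 1 ≤ b u2 + h u2)
    (hcase : (h u1 = 0 ∧ h u2 = 0) ∨ h u1 = 1) :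
    DegenPartition G a b h (insert u2 (X1.erase u1)) (insert u1 (X2.erase u2)) ∧
    wt G a b (insert u2 (X1.erase u1)) (insert u1 (X2.erase u2)) = wt G a b X1 X2 ∧
    (insert u2 (X1.erase u1)).card = X1.card ∧
    (h u1 = 1 → h u2 = 1) := by
  obtain ⟨hX1ne, hX2ne, hdisj, huniv, hm1, hm2⟩ := hP
  have hne12 : u1 ≠ u2 := fun he => (Finset.disjoint_left.1 hdisj hu1) (he ▸ hu2)
  have hu2nX1 : u2 ∉ X1 := fun hc => (Finset.disjoint_left.1 hdisj hc) hu2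
  have hu1nX2 : u1 ∉ X2 := Finset.disjoint_left.1 hdisj hu1
  have hu2nE1 : u2 ∉ X1.erase u1 := fun hc => hu2nX1 (Finset.mem_of_mem_erase hc)
  have hu1nE2 : u1 ∉ X2.erase u2 := fun hc => hu1nX2 (Finset.mem_of_mem_erase hc)
  set d1 := (X1.filter (G.Adj u1)).card with hd1def
  set d2 := (X2.filter (G.Adj u2)).card with hd2def
  set e1 := (X1.filter (G.Adj u2)).card with he1def
  set e2 := (X2.filter (G.Adj u1)).card with he2def
  set e1' := ((X1.erase u1).filter (G.Adj u2)).card with he1'def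
  set e2' := ((X2.erase u2).filter (G.Adj u1)).card with he2'def
  set ε := (if G.Adj u1 u2 then 1 else 0) with hεdef
  have hεle : ε ≤ 1 := by rw [hεdef]; split <;> omega
  have hsplit : ∀ u : V, (X1.filter (G.Adj u)).card + (X2.filter (G.Adj u)).card
      = a u + b u + h u := by
    intro u
    have hnb : G.neighborFinset u = X1.filter (G.Adj u) ∪ X2.filter (G.Adj u) := by
      rw [SimpleGraph.neighborFinset_eq_filter, ← Finset.filter_union, huniv]
    rw [← hdeg u, ← SimpleGraph.card_neighborFinset_eq_degree, hnb,
      Finset.card_union_of_disjoint (Finset.disjoint_filter_filter hdisj)]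
  have hdeg1 : d1 + e2 = a u1 + b u1 + h u1 := hsplit u1
  have hdeg2 : e1 + d2 = a u2 + b u2 + h u2 := hsplit u2
  have he1e : e1' + ε = e1 := by
    by_cases hadj : G.Adj u1 u2
    · have hmem : u1 ∈ X1.filter (G.Adj u2) := Finset.mem_filter.2 ⟨hu1, G.adj_symm hadj⟩
      have h1 : 1 ≤ e1 := by
        rw [he1def]; exact Finset.card_pos.2 ⟨u1, hmem⟩
      rw [he1'def, hεdef, if_pos hadj, Finset.filter_erase,
        Finset.card_erase_of_mem hmem, ← he1def]
      omega
    · have hmem : u1 ∉ X1.filter (G.Adj u2) := by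
        simp only [Finset.mem_filter]; rintro ⟨-, hadj'⟩; exact hadj (G.adj_symm hadj')
      rw [he1'def, hεdef, if_neg hadj, Finset.filter_erase,
        Finset.erase_eq_of_notMem hmem, ← he1def]
      omega
  have he2e : e2' + ε = e2 := by
    by_cases hadj : G.Adj u1 u2
    · have hmem : u2 ∈ X2.filter (G.Adj u1) := Finset.mem_filter.2 ⟨hu2, hadj⟩
      have h1 : 1 ≤ e2 := by
        rw [he2def]; exact Finset.card_pos.2 ⟨u2, hmem⟩
      rw [he2'def, hεdef, if_pos hadj, Finset.filter_erase,
        Finset.card_erase_of_mem hmem, ← he2def]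
      omega
    · have hmem : u2 ∉ X2.filter (G.Adj u1) := by
        simp only [Finset.mem_filter]; rintro ⟨-, hadj'⟩; exact hadj hadj'
      rw [he2'def, hεdef, if_neg hadj, Finset.filter_erase,
        Finset.erase_eq_of_notMem hmem, ← he2def]
      omega
  -- No "bad" subset of the new second part
  have notPB : ¬ ∃ B : Finset V, B ⊆ insert u1 (X2.erase u2) ∧ u1 ∈ B ∧
      ∀ x ∈ B, b x + h x ≤ (B.filter (G.Adj x)).card := by
    rintro ⟨B, hBsub, hu1B, hBdeg⟩
    have hfsub : B.filter (G.Adj u1) ⊆ (X2.erase u2).filter (G.Adj u1) := by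
      intro x hx
      obtain ⟨hxB, hadj⟩ := Finset.mem_filter.1 hx
      refine Finset.mem_filter.2 ⟨?_, hadj⟩
      rcases Finset.mem_insert.1 (hBsub hxB) with rfl | hx'
      · exact absurd hadj (G.irrefl)
      · exact hx'
    have hbB : b u1 + h u1 ≤ e2' := le_trans (hBdeg u1 hu1B) (Finset.card_le_card hfsub)
    have key1 : ε + d1 ≤ a u1 := by omega
    by_cases hX2e : X2.erase u2 = ∅
    · have hz : e2' = 0 := by rw [he2'def, hX2e, Finset.filter_empty, Finset.card_empty]
      have := hb u1
      omega
    · have hX2ne' : (X2.erase u2).Nonempty := Finset.nonempty_of_ne_empty hX2e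
      have hnm : ¬ ∀ X' ⊆ insert u2 X1, X'.Nonempty →
          ∃ x ∈ X', (X'.filter (G.Adj x)).card ≤ a x := by
        intro hmeag
        have hdp : DegenPartition G a b h (insert u2 X1) (X2.erase u2) := by
          refine ⟨⟨u2, Finset.mem_insert_self u2 X1⟩, hX2ne', ?_, ?_, hmeag, ?_⟩
          · rw [Finset.disjoint_left]
            intro x hx hx'
            rcases Finset.mem_insert.1 hx with rfl | hx1
            · exact Finset.notMem_erase x X2 hx'
            · exact Finset.disjoint_left.1 hdisj hx1 (Finset.mem_of_mem_erase hx')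
          · apply Finset.eq_univ_iff_forall.2
            intro v
            have hv : v ∈ X1 ∪ X2 := by rw [huniv]; exact Finset.mem_univ v
            rcases Finset.mem_union.1 hv with h1 | h2
            · exact Finset.mem_union_left _ (Finset.mem_insert_of_mem h1)
            · by_cases hvu : v = u2
              · exact Finset.mem_union_left _ (hvu ▸ Finset.mem_insert_self u2 X1)
              · exact Finset.mem_union_right _ (Finset.mem_erase.2 ⟨hvu, h2⟩)
          · intro X' hX' hne
            exact hm2 X' (hX'.trans (Finset.erase_subset u2 X2)) hne
        have hle := hmaxw _ _ hdp
        have c1 : edgesIn G (insert u2 X1) = edgesIn G X1 + e1 :=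
          edgesIn_insert G X1 u2 hu2nX1
        have c2 : edgesIn G X2 = edgesIn G (X2.erase u2) + d2 := edgesIn_erase G X2 u2 hu2
        have c3 : ∑ x ∈ insert u2 X1, b x = b u2 + ∑ x ∈ X1, b x := Finset.sum_insert hu2nX1
        have c4 : ∑ x ∈ X2.erase u2, a x + a u2 = ∑ x ∈ X2, a x :=
          Finset.sum_erase_add X2 a hu2
        simp only [wt] at hle
        have := hb u2; have := hh u2
        omega
      push_neg at hnm
      obtain ⟨A', hA'sub, hA'ne, hA'deg⟩ := hnm
      have hu2A' : u2 ∈ A' := by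
        by_contra hcon
        have hsubX1 : A' ⊆ X1 := by
          intro x hx
          rcases Finset.mem_insert.1 (hA'sub hx) with rfl | h1
          · exact absurd hx hcon
          · exact h1
        obtain ⟨x, hx, hxle⟩ := hm1 A' hsubX1 hA'ne
        exact absurd hxle (not_le.2 (hA'deg x hx))
      by_cases hu1A' : u1 ∈ A'
      · have hlt := hA'deg u1 hu1A'
        have hsubf : A'.filter (G.Adj u1) ⊆ (insert u2 X1).filter (G.Adj u1) :=
          Finset.filter_subset_filter _ hA'sub
        have hcard : ((insert u2 X1).filter (G.Adj u1)).card ≤ ε + d1 := by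
          rw [Finset.filter_insert]
          by_cases hadj : G.Adj u1 u2
          · rw [if_pos hadj]
            have hε1 : ε = 1 := by rw [hεdef, if_pos hadj]
            have := Finset.card_insert_le u2 (X1.filter (G.Adj u1))
            omega
          · rw [if_neg hadj]
            have hε0 : ε = 0 := by rw [hεdef, if_neg hadj]
            omega
        have := Finset.card_le_card hsubf
        omega
      · apply hnf
        refine ⟨A', B, ⟨u2, hu2A'⟩, ⟨u1, hu1B⟩, ?_, ?_, ?_⟩
        · rw [Finset.disjoint_left]
          intro x hxA hxB
          rcases Finset.mem_insert.1 (hA'sub hxA) with rfl | hx1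
          · rcases Finset.mem_insert.1 (hBsub hxB) with he | hx2
            · exact hne12 he.symm
            · exact Finset.notMem_erase x X2 hx2
          · rcases Finset.mem_insert.1 (hBsub hxB) with rfl | hx2
            · exact hu1A' hxA
            · exact Finset.disjoint_left.1 hdisj hx1 (Finset.mem_of_mem_erase hx2)
        · intro x hx; exact le_of_lt (hA'deg x hx)
        · intro x hx
          have := hBdeg x hx
          omega
  -- No "bad" subset of the new first part
  have notPA : ¬ ∃ A : Finset V, A ⊆ insert u2 (X1.erase u1) ∧ u2 ∈ A ∧
      ∀ x ∈ A, a x + 1 ≤ (A.filter (G.Adj x)).card := by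
    rintro ⟨A, hAsub, hu2A, hAdeg⟩
    have hfsub : A.filter (G.Adj u2) ⊆ (X1.erase u1).filter (G.Adj u2) := by
      intro x hx
      obtain ⟨hxA, hadj⟩ := Finset.mem_filter.1 hx
      refine Finset.mem_filter.2 ⟨?_, hadj⟩
      rcases Finset.mem_insert.1 (hAsub hxA) with rfl | hx'
      · exact absurd hadj (G.irrefl)
      · exact hx'
    have haA : a u2 + 1 ≤ e1' := le_trans (hAdeg u2 hu2A) (Finset.card_le_card hfsub)
    have key2 : ε + d2 + 1 ≤ b u2 + h u2 := by omega
    by_cases hX1e : X1.erase u1 = ∅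
    · have hz : e1' = 0 := by rw [he1'def, hX1e, Finset.filter_empty, Finset.card_empty]
      have := ha u2
      omega
    · have hX1ne' : (X1.erase u1).Nonempty := Finset.nonempty_of_ne_empty hX1e
      have hnm : ¬ ∀ X' ⊆ insert u1 X2, X'.Nonempty →
          ∃ x ∈ X', (X'.filter (G.Adj x)).card + 1 ≤ b x + h x := by
        intro hmeag
        have hdp : DegenPartition G a b h (X1.erase u1) (insert u1 X2) := by
          refine ⟨hX1ne', ⟨u1, Finset.mem_insert_self u1 X2⟩, ?_, ?_, ?_, hmeag⟩
          · rw [Finset.disjoint_left]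
            intro x hx hx'
            rcases Finset.mem_insert.1 hx' with rfl | hx2
            · exact Finset.notMem_erase x X1 hx
            · exact Finset.disjoint_left.1 hdisj (Finset.mem_of_mem_erase hx) hx2
          · apply Finset.eq_univ_iff_forall.2
            intro v
            have hv : v ∈ X1 ∪ X2 := by rw [huniv]; exact Finset.mem_univ v
            rcases Finset.mem_union.1 hv with h1 | h2
            · by_cases hvu : v = u1
              · exact Finset.mem_union_right _ (hvu ▸ Finset.mem_insert_self u1 X2)
              · exact Finset.mem_union_left _ (Finset.mem_erase.2 ⟨hvu, h1⟩)
            · exact Finset.mem_union_right _ (Finset.mem_insert_of_mem h2)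
          · intro X' hX' hne
            exact hm1 X' (hX'.trans (Finset.erase_subset u1 X1)) hne
        have hle := hmaxw _ _ hdp
        have c1 : edgesIn G X1 = edgesIn G (X1.erase u1) + d1 := edgesIn_erase G X1 u1 hu1
        have c2 : edgesIn G (insert u1 X2) = edgesIn G X2 + e2 :=
          edgesIn_insert G X2 u1 hu1nX2
        have c3 : ∑ x ∈ X1.erase u1, b x + b u1 = ∑ x ∈ X1, b x :=
          Finset.sum_erase_add X1 b hu1
        have c4 : ∑ x ∈ insert u1 X2, a x = a u1 + ∑ x ∈ X2, a x := Finset.sum_insert hu1nX2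
        have hwteq : wt G a b (X1.erase u1) (insert u1 X2) = wt G a b X1 X2 := by
          simp only [wt] at hle ⊢
          omega
        have hc := hminc _ _ hdp hwteq
        have hce : (X1.erase u1).card = X1.card - 1 := Finset.card_erase_of_mem hu1
        have hcp : 1 ≤ X1.card := Finset.card_pos.2 ⟨u1, hu1⟩
        omega
      push_neg at hnm
      obtain ⟨B', hB'sub, hB'ne, hB'deg⟩ := hnm
      have hu1B' : u1 ∈ B' := by
        by_contra hcon
        have hsubX2 : B' ⊆ X2 := by
          intro x hx
          rcases Finset.mem_insert.1 (hB'sub hx) with rfl | h2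
          · exact absurd hx hcon
          · exact h2
        obtain ⟨x, hx, hxle⟩ := hm2 B' hsubX2 hB'ne
        have := hB'deg x hx
        omega
      by_cases hu2B' : u2 ∈ B'
      · have hlt := hB'deg u2 hu2B'
        have hsubf : B'.filter (G.Adj u2) ⊆ (insert u1 X2).filter (G.Adj u2) :=
          Finset.filter_subset_filter _ hB'sub
        have hcard : ((insert u1 X2).filter (G.Adj u2)).card ≤ ε + d2 := by
          rw [Finset.filter_insert]
          by_cases hadj : G.Adj u2 u1
          · rw [if_pos hadj]
            have hε1 : ε = 1 := by rw [hεdef, if_pos ((G.adj_comm u1 u2).2 hadj)]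
            have := Finset.card_insert_le u1 (X2.filter (G.Adj u2))
            omega
          · rw [if_neg hadj]
            have hε0 : ε = 0 := by
              rw [hεdef, if_neg (fun hc => hadj ((G.adj_comm u1 u2).1 hc))]
            omega
        have := Finset.card_le_card hsubf
        omega
      · apply hnf
        refine ⟨A, B', ⟨u2, hu2A⟩, ⟨u1, hu1B'⟩, ?_, ?_, ?_⟩
        · rw [Finset.disjoint_left]
          intro x hxA hxB
          rcases Finset.mem_insert.1 (hAsub hxA) with rfl | hx1
          · exact hu2B' hxB
          · rcases Finset.mem_insert.1 (hB'sub hxB) with rfl | hx2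
            · exact Finset.notMem_erase x X1 hx1
            · exact Finset.disjoint_left.1 hdisj (Finset.mem_of_mem_erase hx1) hx2
        · intro x hx
          have := hAdeg x hx
          omega
        · intro x hx
          have := hB'deg x hx
          omega
  -- The swapped partition is degenerate
  have hdisjY : Disjoint (insert u2 (X1.erase u1)) (insert u1 (X2.erase u2)) := by
    rw [Finset.disjoint_left]
    intro x hx hx'
    rcases Finset.mem_insert.1 hx with rfl | hx1
    · rcases Finset.mem_insert.1 hx' with he | hx2
      · exact hne12 he.symm
      · exact Finset.notMem_erase x X2 hx2
    · rcases Finset.mem_insert.1 hx' with rfl | hx2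
      · exact Finset.notMem_erase x X1 hx1
      · exact Finset.disjoint_left.1 hdisj (Finset.mem_of_mem_erase hx1)
          (Finset.mem_of_mem_erase hx2)
  have hunivY : insert u2 (X1.erase u1) ∪ insert u1 (X2.erase u2) = Finset.univ := by
    apply Finset.eq_univ_iff_forall.2
    intro v
    have hv : v ∈ X1 ∪ X2 := by rw [huniv]; exact Finset.mem_univ v
    rcases Finset.mem_union.1 hv with h1 | h2
    · by_cases hvu : v = u1
      · subst hvu; exact Finset.mem_union_right _ (Finset.mem_insert_self v _)
      · exact Finset.mem_union_left _ (Finset.mem_insert_of_mem (Finset.mem_erase.2 ⟨hvu, h1⟩))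
    · by_cases hvu : v = u2
      · subst hvu; exact Finset.mem_union_left _ (Finset.mem_insert_self v _)
      · exact Finset.mem_union_right _ (Finset.mem_insert_of_mem (Finset.mem_erase.2 ⟨hvu, h2⟩))
  have hmeag1 : ∀ X' ⊆ insert u2 (X1.erase u1), X'.Nonempty →
      ∃ x ∈ X', (X'.filter (G.Adj x)).card ≤ a x := by
    intro X' hsub hne
    by_cases hmem : u2 ∈ X'
    · by_contra hcon
      push_neg at hcon
      exact notPA ⟨X', hsub, hmem, fun x hx => by have := hcon x hx; omega⟩
    · apply hm1 X' ?_ hne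
      intro x hx
      rcases Finset.mem_insert.1 (hsub hx) with rfl | hx1
      · exact absurd hx hmem
      · exact Finset.mem_of_mem_erase hx1
  have hmeag2 : ∀ X' ⊆ insert u1 (X2.erase u2), X'.Nonempty →
      ∃ x ∈ X', (X'.filter (G.Adj x)).card + 1 ≤ b x + h x := by
    intro X' hsub hne
    by_cases hmem : u1 ∈ X'
    · by_contra hcon
      push_neg at hcon
      exact notPB ⟨X', hsub, hmem, fun x hx => by have := hcon x hx; omega⟩
    · apply hm2 X' ?_ hne
      intro x hx
      rcases Finset.mem_insert.1 (hsub hx) with rfl | hx1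
      · exact absurd hx hmem
      · exact Finset.mem_of_mem_erase hx1
  have hdpY : DegenPartition G a b h (insert u2 (X1.erase u1)) (insert u1 (X2.erase u2)) :=
    ⟨⟨u2, Finset.mem_insert_self u2 _⟩, ⟨u1, Finset.mem_insert_self u1 _⟩,
      hdisjY, hunivY, hmeag1, hmeag2⟩
  have hle := hmaxw _ _ hdpY
  have c1 : edgesIn G X1 = edgesIn G (X1.erase u1) + d1 := edgesIn_erase G X1 u1 hu1
  have c2 : edgesIn G X2 = edgesIn G (X2.erase u2) + d2 := edgesIn_erase G X2 u2 hu2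
  have c3 : edgesIn G (insert u2 (X1.erase u1)) = edgesIn G (X1.erase u1) + e1' :=
    edgesIn_insert G _ u2 hu2nE1
  have c4 : edgesIn G (insert u1 (X2.erase u2)) = edgesIn G (X2.erase u2) + e2' :=
    edgesIn_insert G _ u1 hu1nE2
  have c5 : ∑ x ∈ X1.erase u1, b x + b u1 = ∑ x ∈ X1, b x := Finset.sum_erase_add X1 b hu1
  have c6 : ∑ x ∈ X2.erase u2, a x + a u2 = ∑ x ∈ X2, a x := Finset.sum_erase_add X2 a hu2
  have c7 : ∑ x ∈ insert u2 (X1.erase u1), b x = b u2 + ∑ x ∈ X1.erase u1, b x :=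
    Finset.sum_insert hu2nE1
  have c8 : ∑ x ∈ insert u1 (X2.erase u2), a x = a u1 + ∑ x ∈ X2.erase u2, a x :=
    Finset.sum_insert hu1nE2
  have hh1 := hh u1
  have hh2 := hh u2
  have hwteq : wt G a b (insert u2 (X1.erase u1)) (insert u1 (X2.erase u2))
      = wt G a b X1 X2 := by
    simp only [wt] at hle ⊢
    omega
  have hcard : (insert u2 (X1.erase u1)).card = X1.card := by
    rw [Finset.card_insert_of_notMem hu2nE1, Finset.card_erase_of_mem hu1]
    have : 1 ≤ X1.card := Finset.card_pos.2 ⟨u1, hu1⟩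
    omega
  refine ⟨hdpY, hwteq, hcard, ?_⟩
  intro hU1
  have hq := hwteq
  simp only [wt] at hq
  omega
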